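/- Let R be an integral domain, G a finite group, and let M and N be left R[G]-modules. Assume that M and N are both projective as R-modules and that at least one of M or N is projective as an R[G]-module. Then M ⊗_R N, endowed with the diagonal action of G (i.e. g•(m ⊗ n) = (g•m) ⊗ (g•n)), is a projective R[G]-module. -/

import Mathlib

open scoped TensorProduct


noncomputable section HigmanAux

variable {R : Type*} [CommRing R] {G : Type*} [Group G] [Fintype G]
  {M : Type*} [AddCommGroup M] [Module R M]

namespace HigmanAux

instance instTower (ρ : Representation R G M) :
    IsScalarTower R (MonoidAlgebra R G) ρ.asModule :=
  ⟨fun r x m => by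
    show ρ.asAlgebraHom (r • x) m = r • ρ.asAlgebraHom x m
    rw [map_smul]
    rfl⟩

/-- The identity of `M`, as an `R`-linear map to `ρ.asModule`. -/
def toRho (ρ : Representation R G M) : M →ₗ[R] ρ.asModule where
  toFun m := ρ.asModuleEquiv.symm m
  map_add' _ _ := rfl
  map_smul' _ _ := rfl

variable (ρ : Representation R G M)

/-- The action map from the induced module, as an `R`-linear map. -/
def ind₀ : MonoidAlgebra R G ⊗[R] M →ₗ[R] ρ.asModule :=
  TensorProduct.lift
    { toFun := fun x => x • toRho ρ
      map_add' := fun x y => add_smul x y _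
      map_smul' := fun r x => by
        ext m
        exact smul_assoc r x (toRho ρ m) }

@[simp] lemma ind₀_tmul (x : MonoidAlgebra R G) (m : M) :
    ind₀ ρ (x ⊗ₜ m) = x • toRho ρ m := rfl

lemma ind₀_Asmul (a : MonoidAlgebra R G) (t : MonoidAlgebra R G ⊗[R] M) :
    ind₀ ρ (a • t) = a • ind₀ ρ t := by
  induction t with
  | zero => simp
  | tmul x m =>
    rw [TensorProduct.smul_tmul', smul_eq_mul]
    simp only [ind₀_tmul, mul_smul]
  | add u v hu hv => simp only [smul_add, map_add, hu, hv]

/-- The action map from the induced module. -/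
def ind : MonoidAlgebra R G ⊗[R] M →ₗ[MonoidAlgebra R G] ρ.asModule where
  toFun := ind₀ ρ
  map_add' := map_add _
  map_smul' a t := ind₀_Asmul ρ a t

@[simp] lemma ind_tmul (x : MonoidAlgebra R G) (m : M) :
    ind ρ (x ⊗ₜ m) = x • toRho ρ m := rfl

/-- Coefficient extraction on the monoid algebra. -/
def coeff (g : G) : MonoidAlgebra R G →ₗ[R] R where
  toFun x := x.coeff g
  map_add' _ _ := rfl
  map_smul' _ _ := rfl

/-- The `g`-component of the induced module. -/
def cmp (g : G) : MonoidAlgebra R G ⊗[R] M →ₗ[R] M :=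
  TensorProduct.lift ((LinearMap.lsmul R M).comp (coeff g))

@[simp] lemma cmp_tmul (g : G) (x : MonoidAlgebra R G) (m : M) :
    cmp g (x ⊗ₜ m) = x.coeff g • m := rfl

lemma asAlgebraHom_eq_sum (x : MonoidAlgebra R G) (m : M) :
    ρ.asAlgebraHom x m = ∑ g : G, x.coeff g • ρ g m := by
  induction x using MonoidAlgebra.induction_linear with
  | zero => simp
  | add a b ha hb => simp [ha, hb, MonoidAlgebra.coeff_add, Finsupp.add_apply, add_smul, Finset.sum_add_distrib]
  | single g r =>
    rw [Representation.asAlgebraHom_single]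
    classical
    simp [MonoidAlgebra.coeff_single, Finsupp.single_apply, ite_smul, Finset.sum_ite_eq]

lemma pi_eq (t : MonoidAlgebra R G ⊗[R] M) :
    ρ.asModuleEquiv (ind ρ t) = ∑ g : G, ρ g (cmp g t) := by
  induction t with
  | zero => simp
  | tmul x m =>
    rw [ind_tmul, Representation.asModuleEquiv_map_smul, asAlgebraHom_eq_sum]
    simp [map_smul]
    rfl
  | add a b ha hb => simp [map_add, ha, hb, Finset.sum_add_distrib]

lemma cmp_single_smul (h g : G) (t : MonoidAlgebra R G ⊗[R] M) :
    cmp g ((MonoidAlgebra.single h (1:R)) • t) = cmp (h⁻¹ * g) t := by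
  induction t with
  | zero => simp
  | tmul x m =>
    rw [TensorProduct.smul_tmul', smul_eq_mul, cmp_tmul, cmp_tmul,
      MonoidAlgebra.single_mul_apply, one_mul]
  | add a b ha hb => simp [smul_add, ha, hb]

/-- Forward direction of Higman's criterion. -/
lemma exists_trace_eq_id (hproj : Module.Projective (MonoidAlgebra R G) ρ.asModule) :
    ∃ f : M →ₗ[R] M, ∀ m : M, ∑ g : G, ρ g (f (ρ g⁻¹ m)) = m := by
  have hsurj : Function.Surjective (ind ρ) := by
    intro m
    exact ⟨(1 : MonoidAlgebra R G) ⊗ₜ (ρ.asModuleEquiv m), by simp [ind_tmul, toRho]; rfl⟩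
  obtain ⟨s, hs⟩ := Module.projective_lifting_property (ind ρ) LinearMap.id hsurj
  refine ⟨(cmp 1).comp ((s.restrictScalars R).comp (toRho ρ)), fun m => ?_⟩
  have key : ∀ g : G, s (toRho ρ (ρ g⁻¹ m)) = (MonoidAlgebra.single g⁻¹ (1:R)) • s (toRho ρ m) := by
    intro g
    rw [← map_smul s]
    congr 1
    apply ρ.asModuleEquiv.injective
    rw [Representation.asModuleEquiv_map_smul]
    rw [show ρ.asAlgebraHom (MonoidAlgebra.single g⁻¹ (1:R)) = ρ g⁻¹ from
      Representation.asAlgebraHom_single_one ρ g⁻¹]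
    rfl
  have step : ∀ g : G, cmp (M := M) 1 (s (toRho ρ (ρ g⁻¹ m))) = cmp g (s (toRho ρ m)) := by
    intro g
    rw [key g, cmp_single_smul, inv_inv, mul_one]
  calc ∑ g : G, ρ g ((cmp 1) (s (toRho ρ (ρ g⁻¹ m))))
      = ∑ g : G, ρ g (cmp g (s (toRho ρ m))) := by
        exact Finset.sum_congr rfl fun g _ => by rw [step g]
    _ = ρ.asModuleEquiv (ind ρ (s (toRho ρ m))) := (pi_eq ρ _).symm
    _ = m := congrArg ρ.asModuleEquiv (LinearMap.congr_fun hs (toRho ρ m))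

/-- Reverse direction of Higman's criterion. -/
lemma projective_of_trace_eq_id (hM : Module.Projective R M) (f : M →ₗ[R] M)
    (hf : ∀ m : M, ∑ g : G, ρ g (f (ρ g⁻¹ m)) = m) :
    Module.Projective (MonoidAlgebra R G) ρ.asModule := by
  haveI := hM
  haveI : Module.Projective (MonoidAlgebra R G) (MonoidAlgebra R G ⊗[R] M) :=
    inferInstance
  -- the would-be `R[G]`-linear section, first as a bare function
  let σ₀ : M → MonoidAlgebra R G ⊗[R] M :=
    fun m => ∑ g : G, MonoidAlgebra.single g (1:R) ⊗ₜ f (ρ g⁻¹ m)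
  have σ₀_add : ∀ a b, σ₀ (a + b) = σ₀ a + σ₀ b := by
    intro a b
    simp [σ₀, map_add, TensorProduct.tmul_add, Finset.sum_add_distrib]
  have σ₀_smul : ∀ (r : R) a, σ₀ (r • a) = r • σ₀ a := by
    intro r a
    simp [σ₀, map_smul, TensorProduct.tmul_smul, Finset.smul_sum]
  have σ₀_equiv : ∀ (h : G) a, σ₀ (ρ h a) = MonoidAlgebra.single h (1:R) • σ₀ a := by
    intro h a
    rw [show MonoidAlgebra.single h (1:R) • σ₀ a
        = ∑ g : G, MonoidAlgebra.single (h * g) (1:R) ⊗ₜ f (ρ g⁻¹ a) from ?_]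
    · refine Fintype.sum_equiv (Equiv.mulLeft h⁻¹) _ _ fun g => ?_
      have hrho : ρ g⁻¹ (ρ h a) = ρ (h⁻¹ * g)⁻¹ a := by
        rw [← Module.End.mul_apply, ← map_mul]
        congr 1
        group
      simp only [σ₀, Equiv.coe_mulLeft, hrho, mul_inv_cancel_left]
    · rw [Finset.smul_sum]
      refine Finset.sum_congr rfl fun g _ => ?_
      rw [TensorProduct.smul_tmul', smul_eq_mul, MonoidAlgebra.single_mul_single, one_mul]
  have equiv_rsmul : ∀ (r : R) (b : ρ.asModule),
      ρ.asModuleEquiv (r • b) = r • ρ.asModuleEquiv b := fun _ _ => rfl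
  have σ₀_Asmul : ∀ (x : MonoidAlgebra R G) (a : ρ.asModule),
      σ₀ (ρ.asModuleEquiv (x • a)) = x • σ₀ (ρ.asModuleEquiv a) := by
    intro x a
    induction x using MonoidAlgebra.induction_on with
    | of g =>
      rw [show ρ.asModuleEquiv ((MonoidAlgebra.of R G g) • a)
          = ρ g (ρ.asModuleEquiv a) from ?_]
      · exact σ₀_equiv g _
      · rw [Representation.asModuleEquiv_map_smul, Representation.asAlgebraHom_of]
    | add x y hx hy =>
      rw [add_smul, map_add, σ₀_add, hx, hy, add_smul]
    | smul r x hx =>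
      rw [smul_assoc, equiv_rsmul, σ₀_smul, hx, smul_assoc]
  let σ : ρ.asModule →ₗ[MonoidAlgebra R G] MonoidAlgebra R G ⊗[R] M :=
    { toFun := fun m => σ₀ (ρ.asModuleEquiv m)
      map_add' := fun a b => σ₀_add _ _
      map_smul' := fun x a => σ₀_Asmul x a }
  have hsplit : (ind ρ).comp σ = LinearMap.id := by
    apply LinearMap.ext
    intro m
    apply ρ.asModuleEquiv.injective
    show ρ.asModuleEquiv (ind ρ (σ₀ (ρ.asModuleEquiv m))) = ρ.asModuleEquiv m
    rw [pi_eq]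
    have : ∀ g : G, cmp (M := M) g (σ₀ (ρ.asModuleEquiv m))
        = f (ρ g⁻¹ (ρ.asModuleEquiv m)) := by
      intro g
      classical
      simp [σ₀, map_sum, MonoidAlgebra.coeff_single, Finsupp.single_apply, ite_smul, Finset.sum_ite_eq, Finset.sum_ite_eq']
    calc ∑ g : G, ρ g (cmp g (σ₀ (ρ.asModuleEquiv m)))
        = ∑ g : G, ρ g (f (ρ g⁻¹ (ρ.asModuleEquiv m))) :=
          Finset.sum_congr rfl fun g _ => by rw [this g]
      _ = ρ.asModuleEquiv m := hf _
  exact Module.Projective.of_split σ (ind ρ) hsplit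

end HigmanAux

end HigmanAux

/-- Let `R` be an integral domain, `G` a finite group, and `M`, `N` left
`R[G]`-modules which are projective over `R` and such that at least one of them is projective
over `R[G]`.  Then `M ⊗_R N`, with the diagonal `G`-action, is projective over `R[G]`. -/
theorem tensor_diagonal_projective
    {R : Type*} [CommRing R] [IsDomain R]
    {G : Type*} [Group G] [Fintype G]
    {M : Type*} [AddCommGroup M] [Module R M]
    {N : Type*} [AddCommGroup N] [Module R N]
    (ρM : Representation R G M) (ρN : Representation R G N)
    (hM : Module.Projective R M) (hN : Module.Projective R N)
    (h : Module.Projective (MonoidAlgebra R G) ρM.asModule ∨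
         Module.Projective (MonoidAlgebra R G) ρN.asModule) :
    Module.Projective (MonoidAlgebra R G) (ρM.tprod ρN).asModule := by
  haveI := hM; haveI := hN
  haveI hMN : Module.Projective R (M ⊗[R] N) := inferInstance
  rcases h with hP | hP
  · obtain ⟨f, hf⟩ := HigmanAux.exists_trace_eq_id ρM hP
    refine HigmanAux.projective_of_trace_eq_id (ρM.tprod ρN) hMN
      (TensorProduct.map f LinearMap.id) (fun t => ?_)
    have key : (∑ g : G, ((ρM.tprod ρN) g) ∘ₗ
        (TensorProduct.map f LinearMap.id) ∘ₗ ((ρM.tprod ρN) g⁻¹)) = LinearMap.id := by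
      apply TensorProduct.ext'
      intro m n
      simp only [LinearMap.sum_apply, LinearMap.comp_apply, Representation.tprod_apply,
        TensorProduct.map_tmul, LinearMap.id_apply]
      have hN' : ∀ g : G, ρN g (ρN g⁻¹ n) = n := fun g => by
        rw [← Module.End.mul_apply, ← map_mul, mul_inv_cancel, map_one, Module.End.one_apply]
      calc ∑ g : G, ρM g (f (ρM g⁻¹ m)) ⊗ₜ[R] ρN g (ρN g⁻¹ n)
          = ∑ g : G, ρM g (f (ρM g⁻¹ m)) ⊗ₜ[R] n :=
            Finset.sum_congr rfl fun g _ => by rw [hN' g]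
        _ = (∑ g : G, ρM g (f (ρM g⁻¹ m))) ⊗ₜ[R] n := by rw [TensorProduct.sum_tmul]
        _ = m ⊗ₜ[R] n := by rw [hf m]
    simpa using LinearMap.congr_fun key t
  · obtain ⟨f, hf⟩ := HigmanAux.exists_trace_eq_id ρN hP
    refine HigmanAux.projective_of_trace_eq_id (ρM.tprod ρN) hMN
      (TensorProduct.map LinearMap.id f) (fun t => ?_)
    have key : (∑ g : G, ((ρM.tprod ρN) g) ∘ₗ
        (TensorProduct.map LinearMap.id f) ∘ₗ ((ρM.tprod ρN) g⁻¹)) = LinearMap.id := by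
      apply TensorProduct.ext'
      intro m n
      simp only [LinearMap.sum_apply, LinearMap.comp_apply, Representation.tprod_apply,
        TensorProduct.map_tmul, LinearMap.id_apply]
      have hM' : ∀ g : G, ρM g (ρM g⁻¹ m) = m := fun g => by
        rw [← Module.End.mul_apply, ← map_mul, mul_inv_cancel, map_one, Module.End.one_apply]
      calc ∑ g : G, ρM g (ρM g⁻¹ m) ⊗ₜ[R] ρN g (f (ρN g⁻¹ n))
          = ∑ g : G, m ⊗ₜ[R] ρN g (f (ρN g⁻¹ n)) :=
            Finset.sum_congr rfl fun g _ => by rw [hM' g]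
        _ = m ⊗ₜ[R] (∑ g : G, ρN g (f (ρN g⁻¹ n))) := by rw [TensorProduct.tmul_sum]
        _ = m ⊗ₜ[R] n := by rw [hf n]
    simpa using LinearMap.congr_fun key t
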